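/- The proximal-gradient (ISTA) iterates x_{k+1} = prox_{g_A}(x_k − ∇f(x_k)) starting from x₀ = 0 are coordinatewise nondecreasing: 0 ≤ x_k ≤ x_{k+1} componentwise for all k ≥ 0. Consequently, the unique minimizer x⋆(ρ) of F_ρ is coordinatewise nonnegative. -/

import Mathlib

open Finset

noncomputable section

/-- Degree of vertex `i` in the (unweighted) graph with adjacency matrix `A`. -/
def deg {n : ℕ} (A : Matrix (Fin n) (Fin n) ℝ) (i : Fin n) : ℝ := ∑ j, A i j

/-- The PageRank matrix `Q = αI + ((1−α)/2)·𝓛 = ((1+α)/2)·I − ((1−α)/2)·D^{-1/2} A D^{-1/2}`. -/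
def Qmat {n : ℕ} (A : Matrix (Fin n) (Fin n) ℝ) (α : ℝ) : Matrix (Fin n) (Fin n) ℝ :=
  fun i j => (if i = j then (1 + α) / 2 else 0)
    - ((1 - α) / 2) * A i j / (Real.sqrt (deg A i) * Real.sqrt (deg A j))

/-- Smooth PageRank objective `f(x) = (1/2)⟨x, Qx⟩ − α⟨D^{-1/2} e_v, x⟩` with seed vertex `v`. -/
def fPR {n : ℕ} (A : Matrix (Fin n) (Fin n) ℝ) (α : ℝ) (v : Fin n) (x : Fin n → ℝ) : ℝ :=
  (1 / 2) * (∑ i, x i * (Qmat A α).mulVec x i) - α * (x v / Real.sqrt (deg A v))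

/-- Gradient of `fPR`: `∇f(x) = Qx − α·D^{-1/2} e_v`. -/
def gradf {n : ℕ} (A : Matrix (Fin n) (Fin n) ℝ) (α : ℝ) (v : Fin n) (x : Fin n → ℝ) :
    Fin n → ℝ :=
  fun i => (Qmat A α).mulVec x i - α * (if i = v then 1 / Real.sqrt (deg A v) else 0)

/-- Weighted ℓ1 norm `‖D^{1/2} x‖₁ = ∑ i, √(d i)·|x i|`. -/
def l1w {n : ℕ} (A : Matrix (Fin n) (Fin n) ℝ) (x : Fin n → ℝ) : ℝ :=
  ∑ i, Real.sqrt (deg A i) * |x i|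

/-- ℓ1-regularized PageRank objective `F_ρ(x) = f(x) + αρ‖D^{1/2}x‖₁`. -/
def Freg {n : ℕ} (A : Matrix (Fin n) (Fin n) ℝ) (α : ℝ) (v : Fin n) (ρ : ℝ)
    (x : Fin n → ℝ) : ℝ :=
  fPR A α v x + α * ρ * l1w A x

/-- Coordinatewise soft-thresholding at levels `t·√(d i)`: this is the proximal map
`prox_{ηg}` of `g(x) = cαρ‖D^{1/2}x‖₁` with `t = η·c·α·ρ`. -/
def softT {n : ℕ} (A : Matrix (Fin n) (Fin n) ℝ) (t : ℝ) (w : Fin n → ℝ) : Fin n → ℝ :=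
  fun i => Real.sign (w i) * max (|w i| - t * Real.sqrt (deg A i)) 0

/-- Euclidean norm on `Fin n → ℝ`. -/
def enorm {n : ℕ} (x : Fin n → ℝ) : ℝ := Real.sqrt (∑ i, (x i) ^ 2)

open Classical in
/-- Degree-weighted volume of a vertex set: `vol(S) = ∑_{i ∈ S} d i`. -/
def volS {n : ℕ} (A : Matrix (Fin n) (Fin n) ℝ) (S : Set (Fin n)) : ℝ :=
  ∑ i ∈ Finset.univ.filter (fun i => i ∈ S), deg A i

/-- Neighbor set of a vertex. -/
def nbr {n : ℕ} (A : Matrix (Fin n) (Fin n) ℝ) (i : Fin n) : Set (Fin n) := {j | A i j ≠ 0}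

/-- Vertex boundary of `S`: vertices outside `S` with a neighbor in `S`. -/
def bdry {n : ℕ} (A : Matrix (Fin n) (Fin n) ℝ) (S : Set (Fin n)) : Set (Fin n) :=
  {j | j ∉ S ∧ ∃ i ∈ S, A j i ≠ 0}

/-- `A` is the adjacency matrix of a finite undirected unweighted loopless graph
with all degrees positive. -/
structure IsGraph {n : ℕ} (A : Matrix (Fin n) (Fin n) ℝ) : Prop where
  symm : ∀ i j, A i j = A j i
  zero_one : ∀ i j, A i j = 0 ∨ A i j = 1
  loopless : ∀ i, A i i = 0
  deg_pos : ∀ i, 0 < deg A i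

lemma st_eq (t u : ℝ) (ht : 0 ≤ t) :
    Real.sign u * max (|u| - t) 0 = max (u - t) 0 - max (-u - t) 0 := by
  rcases lt_trichotomy u 0 with h | h | h
  · rw [Real.sign_of_neg h, abs_of_neg h,
      max_eq_right (by linarith : u - t ≤ 0)]
    ring
  · subst h; simp
  · rw [Real.sign_of_pos h, abs_of_pos h,
      max_eq_right (by linarith : -u - t ≤ 0)]
    ring

lemma st_mono (t : ℝ) (ht : 0 ≤ t) {u u' : ℝ} (h : u ≤ u') :
    Real.sign u * max (|u| - t) 0 ≤ Real.sign u' * max (|u'| - t) 0 := by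
  rw [st_eq t u ht, st_eq t u' ht]
  have h1 : max (u - t) 0 ≤ max (u' - t) 0 := max_le_max (by linarith) le_rfl
  have h2 : max (-u' - t) 0 ≤ max (-u - t) 0 := max_le_max (by linarith) le_rfl
  linarith

lemma st_nonneg (t u : ℝ) (hu : 0 ≤ u) :
    0 ≤ Real.sign u * max (|u| - t) 0 := by
  rcases eq_or_lt_of_le hu with h | h
  · simp [← h]
  · exact mul_nonneg (by rw [Real.sign_of_pos h]; norm_num) (le_max_right _ _)

lemma quad_par {n : ℕ} (Q : Matrix (Fin n) (Fin n) ℝ) (x y : Fin n → ℝ) :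
    4 * (∑ i, ∑ j, ((x i + y i)/2) * (Q i j * ((x j + y j)/2)))
      + ∑ i, ∑ j, (x i - y i) * (Q i j * (x j - y j))
    = 2 * (∑ i, ∑ j, x i * (Q i j * x j)) + 2 * (∑ i, ∑ j, y i * (Q i j * y j)) := by
  simp only [Finset.mul_sum]
  rw [← Finset.sum_add_distrib, ← Finset.sum_add_distrib]
  refine Finset.sum_congr rfl fun i _ => ?_
  rw [← Finset.sum_add_distrib, ← Finset.sum_add_distrib]
  refine Finset.sum_congr rfl fun j _ => ?_
  ring

lemma quadsum {n : ℕ} (Q : Matrix (Fin n) (Fin n) ℝ) (z : Fin n → ℝ) :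
    ∑ i, z i * Q.mulVec z i = ∑ i, ∑ j, z i * (Q i j * z j) := by
  simp [Matrix.mulVec, dotProduct, Finset.mul_sum]

example (z : Fin 3 → ℝ) (i : Fin 3) : ∑ j, (if i = j then (1:ℝ) else 0) * z j = z i := by
  simp

lemma hQoff {n : ℕ} (A : Matrix (Fin n) (Fin n) ℝ) (hG : IsGraph A) (α : ℝ) (hα1 : α ≤ 1)
    {i j : Fin n} (hij : i ≠ j) : Qmat A α i j ≤ 0 := by
  have hA0 : 0 ≤ A i j := by rcases hG.zero_one i j with h | h <;> rw [h] <;> norm_num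
  have h2 : 0 ≤ (1 - α) / 2 * A i j / (Real.sqrt (deg A i) * Real.sqrt (deg A j)) :=
    div_nonneg (mul_nonneg (by linarith) hA0)
      (mul_nonneg (Real.sqrt_nonneg _) (Real.sqrt_nonneg _))
  simp only [Qmat, if_neg hij]
  linarith

lemma quad_abs {n : ℕ} (A : Matrix (Fin n) (Fin n) ℝ) (hG : IsGraph A) (α : ℝ) (hα1 : α ≤ 1)
    (x : Fin n → ℝ) :
    ∑ i, ∑ j, |x i| * (Qmat A α i j * |x j|) ≤ ∑ i, ∑ j, x i * (Qmat A α i j * x j) := by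
  refine Finset.sum_le_sum fun i _ => Finset.sum_le_sum fun j _ => ?_
  by_cases hij : i = j
  · subst hij
    apply le_of_eq
    calc |x i| * (Qmat A α i i * |x i|) = Qmat A α i i * (|x i| * |x i|) := by ring
      _ = Qmat A α i i * (x i * x i) := by rw [abs_mul_abs_self]
      _ = x i * (Qmat A α i i * x i) := by ring
  · have h1 : x i * x j ≤ |x i| * |x j| := by rw [← abs_mul]; exact le_abs_self _
    have h2 := hQoff A hG α hα1 hij
    calc |x i| * (Qmat A α i j * |x j|) = Qmat A α i j * (|x i| * |x j|) := by ring
      _ ≤ Qmat A α i j * (x i * x j) := mul_le_mul_of_nonpos_left h1 h2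
      _ = x i * (Qmat A α i j * x j) := by ring

lemma quad_coercive {n : ℕ} (A : Matrix (Fin n) (Fin n) ℝ) (hG : IsGraph A)
    (α : ℝ) (hα1 : α ≤ 1) (z : Fin n → ℝ) :
    α * ∑ i, (z i)^2 ≤ ∑ i, ∑ j, z i * (Qmat A α i j * z j) := by
  have hs : ∀ i, 0 < Real.sqrt (deg A i) := fun i => Real.sqrt_pos.mpr (hG.deg_pos i)
  have hsq : ∀ i, Real.sqrt (deg A i) ^ 2 = deg A i := fun i => Real.sq_sqrt (hG.deg_pos i).le
  have hA0 : ∀ i j, 0 ≤ A i j := fun i j => by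
    rcases hG.zero_one i j with h | h <;> rw [h] <;> norm_num
  set u : Fin n → ℝ := fun i => z i / Real.sqrt (deg A i) with hu
  have inner : ∀ i, ∑ j, z i * (Qmat A α i j * z j)
      = (1+α)/2 * z i ^ 2 - (1-α)/2 * ∑ j, A i j * (u i * u j) := by
    intro i
    have hterm : ∀ j, z i * (Qmat A α i j * z j)
        = (if j = i then (1+α)/2 * z i ^ 2 else 0) - (1-α)/2 * (A i j * (u i * u j)) := by
      intro j
      simp only [Qmat, hu]
      by_cases hij : i = j
      · subst hij
        simp only [if_pos rfl]
        field_simp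
        simp only [if_true]
        ring
      · rw [if_neg hij, if_neg (Ne.symm hij)]
        field_simp
        ring
    calc ∑ j, z i * (Qmat A α i j * z j)
        = ∑ j, ((if j = i then (1+α)/2 * z i ^ 2 else 0) - (1-α)/2 * (A i j * (u i * u j))) :=
          Finset.sum_congr rfl fun j _ => hterm j
      _ = (∑ j, if j = i then (1+α)/2 * z i ^ 2 else 0)
            - ∑ j, (1-α)/2 * (A i j * (u i * u j)) := Finset.sum_sub_distrib _ _
      _ = (1+α)/2 * z i ^ 2 - (1-α)/2 * ∑ j, A i j * (u i * u j) := by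
          rw [Finset.sum_ite_eq' univ i fun _ => (1+α)/2 * z i ^ 2, ← Finset.mul_sum]
          simp
  have usq : ∀ i, u i ^ 2 * deg A i = z i ^ 2 := by
    intro i
    simp only [hu]
    rw [div_pow, hsq, div_mul_cancel₀ _ (ne_of_gt (hG.deg_pos i))]
  have key : ∑ i, ∑ j, A i j * (u i * u j) ≤ ∑ i, (z i)^2 := by
    have step1 : ∑ i, ∑ j, A i j * (u i * u j)
        ≤ ∑ i, ∑ j, A i j * ((u i ^ 2 + u j ^ 2)/2) := by
      refine Finset.sum_le_sum fun i _ => Finset.sum_le_sum fun j _ => ?_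
      exact mul_le_mul_of_nonneg_left (by nlinarith [sq_nonneg (u i - u j)]) (hA0 i j)
    have step2 : ∑ i, ∑ j, A i j * ((u i ^ 2 + u j ^ 2)/2) = ∑ i, (z i)^2 := by
      have e1 : ∀ i j, A i j * ((u i ^ 2 + u j ^ 2)/2)
          = A i j * u i ^ 2 / 2 + A i j * u j ^ 2 / 2 := fun i j => by ring
      calc ∑ i, ∑ j, A i j * ((u i ^ 2 + u j ^ 2)/2)
          = (∑ i, ∑ j, A i j * u i ^ 2 / 2) + ∑ i, ∑ j, A i j * u j ^ 2 / 2 := by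
            rw [← Finset.sum_add_distrib]
            exact Finset.sum_congr rfl fun i _ => by
              rw [← Finset.sum_add_distrib]
              exact Finset.sum_congr rfl fun j _ => e1 i j
        _ = (∑ i, (z i)^2 / 2) + ∑ j, (z j)^2 / 2 := by
            congr 1
            · refine Finset.sum_congr rfl fun i _ => ?_
              calc ∑ j, A i j * u i ^ 2 / 2 = (∑ j, A i j) * u i ^ 2 / 2 := by
                    rw [Finset.sum_mul, Finset.sum_div]
                _ = (z i)^2 / 2 := by rw [show (∑ j, A i j) = deg A i from rfl]; rw [mul_comm, usq]
            · rw [Finset.sum_comm]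
              refine Finset.sum_congr rfl fun j _ => ?_
              calc ∑ i, A i j * u j ^ 2 / 2 = (∑ i, A i j) * u j ^ 2 / 2 := by
                    rw [Finset.sum_mul, Finset.sum_div]
                _ = (z j)^2 / 2 := by
                    rw [show (∑ i, A i j) = deg A j from by
                      rw [deg]; exact Finset.sum_congr rfl fun i _ => (hG.symm j i).symm]
                    rw [mul_comm, usq]
        _ = ∑ i, (z i)^2 := by rw [← Finset.sum_add_distrib]; exact Finset.sum_congr rfl fun i _ => by ring
    linarith
  have split : ∑ i, ∑ j, z i * (Qmat A α i j * z j)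
      = (1+α)/2 * ∑ i, (z i)^2 - (1-α)/2 * ∑ i, ∑ j, A i j * (u i * u j) := by
    rw [Finset.mul_sum, Finset.mul_sum, ← Finset.sum_sub_distrib]
    exact Finset.sum_congr rfl fun i _ => by rw [inner i, Finset.mul_sum]
  rw [split]
  have hc : (0:ℝ) ≤ (1-α)/2 := by linarith
  nlinarith [mul_le_mul_of_nonneg_left key hc]

/-- The ISTA iterates `x_{k+1} = prox_{g_A}(x_k − ∇f(x_k))` started at
`x₀ = 0` are coordinatewise nondecreasing: `0 ≤ x_k ≤ x_{k+1}` componentwise for all `k`.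
Consequently, the unique minimizer `x⋆(ρ)` of `F_ρ` is coordinatewise nonnegative. -/
theorem ista_iterates_monotone_and_minimizer_nonneg
    {n : ℕ} (A : Matrix (Fin n) (Fin n) ℝ) (hG : IsGraph A)
    (α ρ : ℝ) (hα : 0 < α) (hα1 : α ≤ 1) (hρ : 0 < ρ) (v : Fin n)
    (x : ℕ → Fin n → ℝ)
    (hx0 : x 0 = 0)
    (hxs : ∀ k, x (k + 1) = softT A (α * ρ) (fun i => x k i - gradf A α v (x k) i)) :
    (∀ (k : ℕ) (i : Fin n), 0 ≤ x k i ∧ x k i ≤ x (k + 1) i) ∧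
    ∀ xstar : Fin n → ℝ,
      (∀ z, Freg A α v ρ xstar ≤ Freg A α v ρ z) → ∀ i : Fin n, 0 ≤ xstar i := by
  have hs : ∀ i, 0 < Real.sqrt (deg A i) := fun i => Real.sqrt_pos.mpr (hG.deg_pos i)
  have hA0 : ∀ i j, 0 ≤ A i j := fun i j => by
    rcases hG.zero_one i j with h | h <;> rw [h] <;> norm_num
  have ht : ∀ i, 0 ≤ α * ρ * Real.sqrt (deg A i) := fun i => by positivity
  -- nonnegativity of the coefficients of I - Q
  have hcoef : ∀ i j, 0 ≤ (if i = j then (1:ℝ) else 0) - Qmat A α i j := by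
    intro i j
    have h2 : 0 ≤ (1 - α) / 2 * A i j / (Real.sqrt (deg A i) * Real.sqrt (deg A j)) :=
      div_nonneg (mul_nonneg (by linarith) (hA0 i j))
        (mul_nonneg (Real.sqrt_nonneg _) (Real.sqrt_nonneg _))
    by_cases hij : i = j
    · subst hij
      simp only [Qmat, eq_self_iff_true, if_true]
      linarith
    · simp only [Qmat, if_neg hij]
      linarith
  -- representation of the forward step x - ∇f(x)
  have hwrep : ∀ (z : Fin n → ℝ) (i : Fin n), z i - gradf A α v z i
      = (∑ j, ((if i = j then (1:ℝ) else 0) - Qmat A α i j) * z j)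
        + α * (if i = v then 1 / Real.sqrt (deg A v) else 0) := by
    intro z i
    have h1 : ∑ j, ((if i = j then (1:ℝ) else 0) - Qmat A α i j) * z j
        = z i - ∑ j, Qmat A α i j * z j := by
      rw [show (fun j => ((if i = j then (1:ℝ) else 0) - Qmat A α i j) * z j)
          = fun j => (if i = j then (1:ℝ) else 0) * z j - Qmat A α i j * z j from
          funext fun j => by ring, Finset.sum_sub_distrib]
      congr 1
      simp
    simp only [gradf, Matrix.mulVec, dotProduct]
    rw [h1]
    ring
  have hwmono : ∀ (z z' : Fin n → ℝ), (∀ j, z j ≤ z' j) → ∀ i,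
      z i - gradf A α v z i ≤ z' i - gradf A α v z' i := by
    intro z z' h i
    rw [hwrep, hwrep]
    have : ∑ j, ((if i = j then (1:ℝ) else 0) - Qmat A α i j) * z j
        ≤ ∑ j, ((if i = j then (1:ℝ) else 0) - Qmat A α i j) * z' j :=
      Finset.sum_le_sum fun j _ => mul_le_mul_of_nonneg_left (h j) (hcoef i j)
    linarith
  have hstep : ∀ k i, x k i ≤ x (k+1) i := by
    intro k
    induction k with
    | zero =>
      intro i
      have hw0 : 0 ≤ x 0 i - gradf A α v (x 0) i := by
        rw [hwrep]
        simp only [hx0, Pi.zero_apply, mul_zero, Finset.sum_const_zero, zero_add]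
        split_ifs
        · positivity
        · simp
      have h0 : x 0 i = 0 := by rw [hx0]; rfl
      rw [h0, hxs 0]
      exact st_nonneg _ _ hw0
    | succ k ih =>
      intro i
      rw [hxs k, hxs (k+1)]
      simp only [softT]
      exact st_mono _ (ht i) (hwmono _ _ ih i)
  have hnn : ∀ k i, 0 ≤ x k i := by
    intro k
    induction k with
    | zero => intro i; rw [hx0]; exact le_refl 0
    | succ k ih => intro i; exact le_trans (ih i) (hstep k i)
  refine ⟨fun k i => ⟨hnn k i, hstep k i⟩, ?_⟩
  -- minimizer part
  intro xstar hmin i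
  set y : Fin n → ℝ := fun j => |xstar j| with hy
  set m : Fin n → ℝ := fun j => (xstar j + y j)/2 with hm
  set d : Fin n → ℝ := fun j => xstar j - y j with hd
  have hFy : Freg A α v ρ y ≤ Freg A α v ρ xstar := by
    simp only [Freg, fPR, l1w]
    rw [quadsum, quadsum]
    have hq : ∑ i, ∑ j, y i * (Qmat A α i j * y j)
        ≤ ∑ i, ∑ j, xstar i * (Qmat A α i j * xstar j) := by
      simpa only [hy] using quad_abs A hG α hα1 xstar
    have hlin : xstar v / Real.sqrt (deg A v) ≤ y v / Real.sqrt (deg A v) :=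
      (div_le_div_iff_of_pos_right (hs v)).mpr (by simp only [hy]; exact le_abs_self _)
    have hl1 : ∑ i, Real.sqrt (deg A i) * |y i| = ∑ i, Real.sqrt (deg A i) * |xstar i| := by
      simp [hy, abs_abs]
    rw [hl1]
    have := mul_le_mul_of_nonneg_left hlin hα.le
    linarith
  have hFm : Freg A α v ρ m ≤ (Freg A α v ρ xstar + Freg A α v ρ y)/2
      - (1/8) * ∑ i, ∑ j, d i * (Qmat A α i j * d j) := by
    have hpar := quad_par (Qmat A α) xstar y
    have hqm : ∑ i, ∑ j, m i * (Qmat A α i j * m j)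
        = ∑ i, ∑ j, ((xstar i + y i)/2) * (Qmat A α i j * ((xstar j + y j)/2)) := by
      simp only [hm]
    have hqd : ∑ i, ∑ j, d i * (Qmat A α i j * d j)
        = ∑ i, ∑ j, (xstar i - y i) * (Qmat A α i j * (xstar j - y j)) := by
      simp only [hd]
    have hlin : m v / Real.sqrt (deg A v)
        = (xstar v / Real.sqrt (deg A v) + y v / Real.sqrt (deg A v))/2 := by
      simp only [hm]; ring
    have hl1 : l1w A m ≤ (l1w A xstar + l1w A y)/2 := by
      simp only [l1w]
      rw [← Finset.sum_add_distrib, Finset.sum_div]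
      refine Finset.sum_le_sum fun j _ => ?_
      have habs : |m j| ≤ (|xstar j| + |y j|)/2 := by
        simp only [hm]
        rw [abs_div]
        have := abs_add_le (xstar j) (y j)
        have h2 : |(2:ℝ)| = 2 := by norm_num
        rw [h2]
        linarith
      calc Real.sqrt (deg A j) * |m j| ≤ Real.sqrt (deg A j) * ((|xstar j| + |y j|)/2) :=
            mul_le_mul_of_nonneg_left habs (Real.sqrt_nonneg _)
        _ = (Real.sqrt (deg A j) * |xstar j| + Real.sqrt (deg A j) * |y j|)/2 := by ring
    simp only [Freg, fPR]
    rw [quadsum, quadsum, quadsum, hqm, hqd] at *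
    rw [hlin]
    nlinarith [hl1, mul_le_mul_of_nonneg_left hl1 (mul_nonneg hα.le hρ.le)]
  have hQd : ∑ i, ∑ j, d i * (Qmat A α i j * d j) ≤ 0 := by
    have h2 := hmin m
    linarith
  have hco := quad_coercive A hG α hα1 d
  have hsum0 : ∑ j, (d j)^2 = 0 := by
    have hpos : 0 ≤ ∑ j, (d j)^2 := Finset.sum_nonneg fun j _ => sq_nonneg _
    nlinarith
  have hdi : d i = 0 := by
    have := (Finset.sum_eq_zero_iff_of_nonneg fun j _ => sq_nonneg (d j)).mp hsum0 i (mem_univ i)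
    exact pow_eq_zero_iff (by norm_num) |>.mp this
  have : xstar i = |xstar i| := by
    have h := hdi
    simp only [hd, hy] at h
    linarith
  rw [this]
  exact abs_nonneg _
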